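/- Let p be a prime, q = p², and let S ⊆ P^{m-1}(F_q) be stable under the Frobenius x ↦ x^p (e.g. the F_q-points of a variety defined over F_p). Then E_{c ∈ F_p^m}[#{[x] ∈ S : c·x = 0}] = p^{-1}·|S ∩ P^{m-1}(F_p)| + p^{-2}·(|S| − |S ∩ P^{m-1}(F_p)|). -/

import Mathlib

open Classical

section AuxHyperplane

open Polynomial in
private lemma aux_card_eval_zero_le {K : Type*} [Field K] [Fintype K]
    (f : Polynomial K) (hf : f ≠ 0) :
    (Finset.univ.filter fun a => f.eval a = 0).card ≤ f.natDegree := by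
  have hsub : (Finset.univ.filter fun a => f.eval a = 0) ⊆ f.roots.toFinset := by
    intro a ha
    simp only [Finset.mem_filter] at ha
    simp [Multiset.mem_toFinset, mem_roots, hf, IsRoot, ha.2]
  calc (Finset.univ.filter fun a => f.eval a = 0).card ≤ f.roots.toFinset.card :=
        Finset.card_le_card hsub
    _ ≤ Multiset.card f.roots := f.roots.toFinset_card_le
    _ ≤ f.natDegree := f.card_roots'

open Polynomial in
private lemma aux_span_card_one (p : ℕ) [Fact p.Prime] (m : ℕ) (v : Fin m → GaloisField p 2)
    (hv : v ≠ 0) (hfix : ∃ a : (GaloisField p 2)ˣ, a • v = fun i => v i ^ p) :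
    Nat.card (Submodule.span (ZMod p) (Set.range v)) = p := by
  letI : Fintype (GaloisField p 2) := Fintype.ofFinite _
  have hp1 : 1 < p := (Fact.out : p.Prime).one_lt
  set W := Submodule.span (ZMod p) (Set.range v) with hW
  letI : Fintype W := Fintype.ofFinite _
  obtain ⟨a, ha⟩ := hfix
  have hstab : ∀ w ∈ W, w ^ p = (a : GaloisField p 2) * w := by
    intro w hw
    induction hw using Submodule.span_induction with
    | mem w hw =>
      obtain ⟨i, rfl⟩ := hw
      have := congrFun ha i
      simpa [Units.smul_def] using this.symm
    | zero => simp [zero_pow (Nat.Prime.ne_zero Fact.out)]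
    | add x y hx hy ihx ihy =>
      rw [add_pow_char, ihx, ihy, mul_add]
    | smul c x hx ih =>
      rw [Algebra.smul_def, mul_pow, ← map_pow, ZMod.pow_card, ih]; ring
  set f : Polynomial (GaloisField p 2) := X ^ p - C (a : GaloisField p 2) * X with hf
  have hdeg : f.natDegree = p := by
    rw [hf, natDegree_sub_eq_left_of_natDegree_lt]
    · exact natDegree_X_pow p
    · calc (C (a : GaloisField p 2) * X).natDegree ≤ 1 :=
          natDegree_C_mul_le _ _ |>.trans (by simp)
        _ < p := hp1
        _ = (X ^ p : Polynomial (GaloisField p 2)).natDegree := (natDegree_X_pow p).symm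
  have hfne : f ≠ 0 := fun h => by simp [h] at hdeg; omega
  have hcardle : Fintype.card W ≤ p := by
    have : Fintype.card W ≤
        (Finset.univ.filter fun x : GaloisField p 2 => f.eval x = 0).card := by
      apply Finset.card_le_card_of_injOn (fun w : W => (w : GaloisField p 2))
      · intro w _
        simp only [Finset.mem_filter, Finset.mem_univ, true_and, hf]
        simp [hstab w.1 w.2]
      · exact fun x _ y _ h => Subtype.ext h
    exact this.trans ((aux_card_eval_zero_le f hfne).trans_eq hdeg)
  have hpow : Fintype.card W = p ^ Module.finrank (ZMod p) W := by
    have := Module.card_eq_pow_finrank (K := ZMod p) (V := W)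
    simpa [ZMod.card] using this
  have hne_bot : ∃ i, v i ≠ 0 := by
    by_contra h
    push_neg at h
    exact hv (_root_.funext h)
  obtain ⟨i, hi⟩ := hne_bot
  have hmem : v i ∈ W := Submodule.subset_span ⟨i, rfl⟩
  have hfr : Module.finrank (ZMod p) W = 1 := by
    have h1 : Module.finrank (ZMod p) W ≤ 1 := by
      by_contra h
      push_neg at h
      have h2 : p ^ 2 ≤ p ^ Module.finrank (ZMod p) W :=
        Nat.pow_le_pow_right (by omega) h
      nlinarith [hpow, hcardle]
    have h0 : Module.finrank (ZMod p) W ≠ 0 := by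
      intro h
      rw [h, pow_zero] at hpow
      have : Subsingleton W := Fintype.card_le_one_iff_subsingleton.mp hpow.le
      have : (⟨v i, hmem⟩ : W) = ⟨0, W.zero_mem⟩ := Subsingleton.elim _ _
      exact hi (by simpa using congrArg Subtype.val this)
    omega
  rw [Nat.card_eq_fintype_card, hpow, hfr, pow_one]

private lemma aux_span_card_two (p : ℕ) [Fact p.Prime] (m : ℕ) (v : Fin m → GaloisField p 2)
    (hv : v ≠ 0) (hnfix : ¬ ∃ a : (GaloisField p 2)ˣ, a • v = fun i => v i ^ p) :
    Nat.card (Submodule.span (ZMod p) (Set.range v)) = p ^ 2 := by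
  set W := Submodule.span (ZMod p) (Set.range v) with hW
  have hfrK : Module.finrank (ZMod p) (GaloisField p 2) = 2 :=
    GaloisField.finrank p (by norm_num)
  have hle : Module.finrank (ZMod p) W ≤ 2 := le_trans W.finrank_le (le_of_eq hfrK)
  have hnot1 : ¬ Module.finrank (ZMod p) W ≤ 1 := by
    intro h
    rw [finrank_le_one_iff] at h
    obtain ⟨a0, ha0⟩ := h
    have hvi : ∀ i, ∃ c : ZMod p, v i = c • (a0 : GaloisField p 2) := by
      intro i
      have hmem : v i ∈ W := Submodule.subset_span ⟨i, rfl⟩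
      obtain ⟨c, hc⟩ := ha0 ⟨v i, hmem⟩
      exact ⟨c, by simpa using (congrArg Subtype.val hc).symm⟩
    have hane : (a0 : GaloisField p 2) ≠ 0 := by
      intro h0
      apply hv
      funext i
      obtain ⟨c, hc⟩ := hvi i
      simp [hc, h0]
    refine hnfix ⟨Units.mk0 ((a0 : GaloisField p 2) ^ (p - 1)) (pow_ne_zero _ hane), ?_⟩
    funext i
    obtain ⟨c, hc⟩ := hvi i
    have hp1 : 1 ≤ p := (Fact.out : p.Prime).one_le
    have : (a0 : GaloisField p 2) ^ p = (a0 : GaloisField p 2) ^ (p - 1) * a0 := by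
      rw [← pow_succ]
      congr 1
      omega
    simp only [Pi.smul_apply, Units.smul_def, Units.val_mk0, smul_eq_mul, hc, smul_pow,
      ZMod.pow_card, this]
    rw [mul_smul_comm]
  have hfr : Module.finrank (ZMod p) W = 2 := by omega
  have htop : W = ⊤ := Submodule.eq_top_of_finrank_eq (by rw [hfr, hfrK])
  rw [htop]
  rw [Nat.card_congr (Submodule.topEquiv.toEquiv)]
  exact GaloisField.card p 2 (by norm_num)

private lemma aux_ker_count (p : ℕ) [Fact p.Prime] (m : ℕ) (v : Fin m → GaloisField p 2) :
    (Finset.univ.filter fun c : Fin m → ZMod p =>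
        ∑ i, algebraMap (ZMod p) (GaloisField p 2) (c i) * v i = 0).card
      * Nat.card (Submodule.span (ZMod p) (Set.range v)) = p ^ m := by
  set L : (Fin m → ZMod p) →ₗ[ZMod p] GaloisField p 2 :=
    Fintype.linearCombination (ZMod p) v with hL
  have hker : (Finset.univ.filter fun c : Fin m → ZMod p =>
      ∑ i, algebraMap (ZMod p) (GaloisField p 2) (c i) * v i = 0).card
      = Nat.card (LinearMap.ker L) := by
    rw [Nat.card_eq_fintype_card, Fintype.card_subtype]
    apply Finset.card_nbij id (fun c hc => ?_) (fun c hc _ _ => id) (fun c hc => ⟨c, ?_, rfl⟩)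
    · simp only [Finset.mem_coe, Finset.mem_filter, Finset.mem_univ, true_and] at hc ⊢
      rw [LinearMap.mem_ker, hL, Fintype.linearCombination_apply]
      rw [← hc]
      exact Finset.sum_congr rfl fun i _ => (Algebra.smul_def _ _)
    · simp only [Finset.mem_coe, Finset.mem_filter, Finset.mem_univ, true_and] at hc ⊢
      rw [LinearMap.mem_ker, hL, Fintype.linearCombination_apply] at hc
      rw [← hc]
      exact Finset.sum_congr rfl fun i _ => (Algebra.smul_def _ _).symm
  have hrange : LinearMap.range L = Submodule.span (ZMod p) (Set.range v) :=
    by rw [hL]; exact Fintype.range_linearCombination _ _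
  have h1 : Nat.card (Fin m → ZMod p)
      = Nat.card (LinearMap.ker L) * Nat.card ((Fin m → ZMod p) ⧸ LinearMap.ker L) :=
    Submodule.card_eq_card_quotient_mul_card _
  have h2 : Nat.card ((Fin m → ZMod p) ⧸ LinearMap.ker L)
      = Nat.card (Submodule.span (ZMod p) (Set.range v)) := by
    rw [← hrange]
    exact Nat.card_congr L.quotKerEquivRange.toEquiv
  have h3 : Nat.card (Fin m → ZMod p) = p ^ m := by
    simp [Nat.card_eq_fintype_card, ZMod.card]
  rw [hker, ← h2, ← h1, h3]

end AuxHyperplane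

/-- Incidences over `F_q`, `q = p²`, averaged over hyperplanes defined over `F_p`:
if `S ⊆ P^{m-1}(F_q)` is stable under the coordinatewise Frobenius `x ↦ x^p`, then
`E_{c ∈ F_p^m}[#{[x] ∈ S : c·x = 0}] = p^{-1}·|S^Frob| + p^{-2}·(|S| − |S^Frob|)`,
where `S^Frob` (the Frobenius-fixed points) plays the role of `S ∩ P^{m-1}(F_p)`. -/
theorem average_hyperplane_section_count_quadratic_extension
    (p : ℕ) [Fact p.Prime] (m : ℕ)
    (S : Finset (Projectivization (GaloisField p 2) (Fin m → GaloisField p 2)))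
    (hFrob : ∀ x ∈ S,
      ∀ h : ((fun i => x.rep i ^ p) : Fin m → GaloisField p 2) ≠ 0,
        Projectivization.mk (GaloisField p 2) (fun i => x.rep i ^ p) h ∈ S) :
    (∑ c : Fin m → ZMod p,
        ((S.filter (fun x =>
            ∑ i, algebraMap (ZMod p) (GaloisField p 2) (c i) * x.rep i = 0)).card : ℝ))
        / (p : ℝ) ^ m =
      ((S.filter (fun x =>
          ∀ h : ((fun i => x.rep i ^ p) : Fin m → GaloisField p 2) ≠ 0,
            Projectivization.mk (GaloisField p 2) (fun i => x.rep i ^ p) h = x)).card : ℝ)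
          / (p : ℝ)
        + ((S.card : ℝ) -
            ((S.filter (fun x =>
              ∀ h : ((fun i => x.rep i ^ p) : Fin m → GaloisField p 2) ≠ 0,
                Projectivization.mk (GaloisField p 2) (fun i => x.rep i ^ p) h = x)).card : ℝ))
          / (p : ℝ) ^ 2 := by
  classical
  have hp0 : (p : ℝ) ≠ 0 := Nat.cast_ne_zero.mpr (Fact.out : p.Prime).ne_zero
  set Pred : Projectivization (GaloisField p 2) (Fin m → GaloisField p 2) → Prop :=
    fun x => ∀ h : ((fun i => x.rep i ^ p) : Fin m → GaloisField p 2) ≠ 0,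
      Projectivization.mk (GaloisField p 2) (fun i => x.rep i ^ p) h = x with hPred
  -- characterize Pred
  have hPiff : ∀ x : Projectivization (GaloisField p 2) (Fin m → GaloisField p 2),
      Pred x ↔ ∃ a : (GaloisField p 2)ˣ, a • x.rep = fun i => x.rep i ^ p := by
    intro x
    have hvne := x.rep_nonzero
    have hpne : ((fun i => x.rep i ^ p) : Fin m → GaloisField p 2) ≠ 0 := by
      intro h
      apply hvne
      funext i
      have := congrFun h i
      simpa using pow_eq_zero_iff (Nat.Prime.ne_zero Fact.out) |>.mp this
    constructor
    · intro h
      have h2 := (h hpne).trans (Projectivization.mk_rep x).symm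
      rw [Projectivization.mk_eq_mk_iff] at h2
      exact h2
    · rintro ⟨a, ha⟩ h'
      have : Projectivization.mk (GaloisField p 2) (fun i => x.rep i ^ p) hpne
          = Projectivization.mk (GaloisField p 2) x.rep hvne :=
        (Projectivization.mk_eq_mk_iff _ _ _ _ _).mpr ⟨a, ha⟩
      exact this.trans (Projectivization.mk_rep x)
  -- per-point counts
  have hPval : ∀ x : Projectivization (GaloisField p 2) (Fin m → GaloisField p 2), Pred x →
      ((Finset.univ.filter fun c : Fin m → ZMod p =>
        ∑ i, algebraMap (ZMod p) (GaloisField p 2) (c i) * x.rep i = 0).card : ℝ)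
        = (p : ℝ) ^ m / (p : ℝ) := by
    intro x hx
    have h1 := aux_ker_count p m x.rep
    rw [aux_span_card_one p m x.rep x.rep_nonzero ((hPiff x).mp hx)] at h1
    have h2 := congrArg (Nat.cast (R := ℝ)) h1
    push_cast at h2
    field_simp
    linarith [h2]
  have hNval : ∀ x : Projectivization (GaloisField p 2) (Fin m → GaloisField p 2), ¬ Pred x →
      ((Finset.univ.filter fun c : Fin m → ZMod p =>
        ∑ i, algebraMap (ZMod p) (GaloisField p 2) (c i) * x.rep i = 0).card : ℝ)
        = (p : ℝ) ^ m / (p : ℝ) ^ 2 := by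
    intro x hx
    have h1 := aux_ker_count p m x.rep
    rw [aux_span_card_two p m x.rep x.rep_nonzero (fun h => hx ((hPiff x).mpr h))] at h1
    have h2 := congrArg (Nat.cast (R := ℝ)) h1
    push_cast at h2
    field_simp
    linarith [h2]
  -- swap the sums
  have hswapN : (∑ c : Fin m → ZMod p,
      (S.filter (fun x =>
        ∑ i, algebraMap (ZMod p) (GaloisField p 2) (c i) * x.rep i = 0)).card)
      = ∑ x ∈ S, (Finset.univ.filter fun c : Fin m → ZMod p =>
          ∑ i, algebraMap (ZMod p) (GaloisField p 2) (c i) * x.rep i = 0).card := by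
    simp only [Finset.card_filter]
    exact Finset.sum_comm
  have hswap : (∑ c : Fin m → ZMod p,
      ((S.filter (fun x =>
        ∑ i, algebraMap (ZMod p) (GaloisField p 2) (c i) * x.rep i = 0)).card : ℝ))
      = ∑ x ∈ S, ((Finset.univ.filter fun c : Fin m → ZMod p =>
          ∑ i, algebraMap (ZMod p) (GaloisField p 2) (c i) * x.rep i = 0).card : ℝ) := by
    rw [← Nat.cast_sum, ← Nat.cast_sum, hswapN]
  rw [hswap]
  -- split the sum according to Pred
  rw [← Finset.sum_filter_add_sum_filter_not S Pred]
  have e1 : ∑ x ∈ S.filter Pred, ((Finset.univ.filter fun c : Fin m → ZMod p =>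
      ∑ i, algebraMap (ZMod p) (GaloisField p 2) (c i) * x.rep i = 0).card : ℝ)
      = ((S.filter Pred).card : ℝ) * ((p : ℝ) ^ m / (p : ℝ)) := by
    rw [Finset.sum_congr rfl (fun x hx => hPval x (Finset.mem_filter.mp hx).2),
      Finset.sum_const, nsmul_eq_mul]
  have e2 : ∑ x ∈ S.filter (fun x => ¬ Pred x),
      ((Finset.univ.filter fun c : Fin m → ZMod p =>
      ∑ i, algebraMap (ZMod p) (GaloisField p 2) (c i) * x.rep i = 0).card : ℝ)
      = ((S.filter (fun x => ¬ Pred x)).card : ℝ) * ((p : ℝ) ^ m / (p : ℝ) ^ 2) := by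
    rw [Finset.sum_congr rfl (fun x hx => hNval x (Finset.mem_filter.mp hx).2),
      Finset.sum_const, nsmul_eq_mul]
  rw [e1, e2]
  have hcards : ((S.filter (fun x => ¬ Pred x)).card : ℝ)
      = (S.card : ℝ) - ((S.filter Pred).card : ℝ) := by
    have h := Finset.card_filter_add_card_filter_not (s := S) (p := Pred)
    have h' := congrArg (Nat.cast (R := ℝ)) h
    push_cast at h'
    linarith
  rw [hcards]
  field_simp
  ring
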